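/- Temperature threshold for entanglement survival, T_e < 2T_s: Let ω, T_s, T_e > 0 be real numbers, and define the Bose–Einstein occupations n̄_s = 1/(exp(ω/T_s) − 1) and n̄_e = 1/(exp(ω/T_e) − 1). Then n̄_s + √(n̄_s·(n̄_s+1)) > n̄_e if and only if T_e < 2·T_s. (Hence a two-mode squeezed vacuum with squeezed occupation n̄_s immersed in isotropic thermal noise of occupation n̄_e remains entangled exactly when the environment temperature is below twice the squeezing temperature.) -/

import Mathlib

/-- **Temperature threshold for entanglement survival, `T_e < 2T_s`**: with
Bose–Einstein occupations `n̄_s = 1/(e^{ω/T_s} − 1)` and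
`n̄_e = 1/(e^{ω/T_e} − 1)`, the entanglement condition
`n̄_s + √(n̄_s(n̄_s+1)) > n̄_e` holds iff `T_e < 2T_s`. -/
theorem entanglement_temperature_threshold (ω Ts Te : ℝ)
    (hω : 0 < ω) (hTs : 0 < Ts) (hTe : 0 < Te) :
    (1 / (Real.exp (ω / Ts) - 1) +
        Real.sqrt ((1 / (Real.exp (ω / Ts) - 1)) * (1 / (Real.exp (ω / Ts) - 1) + 1))
      > 1 / (Real.exp (ω / Te) - 1)) ↔ Te < 2 * Ts := by
  set s := Real.exp (ω / (2 * Ts)) with hsdef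
  have hs1 : 1 < s := Real.one_lt_exp_iff.mpr (by positivity)
  have hsum : ω / Ts = ω / (2 * Ts) + ω / (2 * Ts) := by field_simp; ring
  have hexp : Real.exp (ω / Ts) = s * s := by rw [hsum, Real.exp_add]
  have ha : 0 < s * s - 1 := by nlinarith
  have ha' : s * s - 1 ≠ 0 := ne_of_gt ha
  have hsq : (1 / (s * s - 1)) * (1 / (s * s - 1) + 1) = (s / (s * s - 1)) ^ 2 := by
    rw [div_add_one ha', div_mul_div_comm, div_pow]; congr 1 <;> ring
  have hsqrt : Real.sqrt ((1 / (s * s - 1)) * (1 / (s * s - 1) + 1)) = s / (s * s - 1) := by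
    rw [hsq, Real.sqrt_sq (by positivity)]
  have hlhs : 1 / (s * s - 1) + s / (s * s - 1) = 1 / (s - 1) := by
    rw [← add_div]
    rw [div_eq_div_iff ha' (by intro h; nlinarith)]
    ring
  have hb : 0 < Real.exp (ω / Te) - 1 := by
    have := Real.one_lt_exp_iff.mpr (show (0:ℝ) < ω / Te by positivity)
    linarith
  rw [hexp, hsqrt, hlhs]
  rw [gt_iff_lt, div_lt_div_iff₀ hb (by linarith : (0:ℝ) < s - 1)]
  constructor
  · intro h
    have hlt : s < Real.exp (ω / Te) := by linarith
    have : ω / (2 * Ts) < ω / Te := Real.exp_lt_exp.mp hlt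
    rw [div_lt_div_iff₀ (by positivity) hTe] at this
    nlinarith
  · intro h
    have : ω / (2 * Ts) < ω / Te := by
      rw [div_lt_div_iff₀ (by positivity) hTe]; nlinarith
    have := Real.exp_lt_exp.mpr this
    rw [← hsdef] at this
    linarith
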